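/- For any additive function g: ℕ → ℂ and any Y ≥ 3, the average (1/Y)∑_{n ≤ Y} g(n) equals A_g(Y) + O(B_g(Y)/√(log Y)), where the implied constant is absolute. -/

import Mathlib

open Finset

/-- The set of prime powers `p^k ≤ Y` (as natural numbers `≥ 2`). -/
noncomputable def ppows (Y : ℝ) : Finset ℕ :=
  (Finset.Icc 2 ⌊Y⌋₊).filter IsPrimePow

/-- `A_g(Y) = ∑_{p^k ≤ Y} g(p^k) p^{-k} (1 - 1/p)`. -/
noncomputable def Ag (g : ℕ → ℂ) (Y : ℝ) : ℂ :=
  ∑ q ∈ ppows Y, g q * (1 / (q : ℂ)) * (1 - 1 / ((q.minFac : ℂ)))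

/-- `B_g(Y) = (∑_{p^k ≤ Y} |g(p^k)|² p^{-k})^{1/2}`. -/
noncomputable def Bg (g : ℕ → ℂ) (Y : ℝ) : ℝ :=
  Real.sqrt (∑ q ∈ ppows Y, ‖g q‖ ^ 2 / (q : ℝ))

/-- `g` is additive: `g(mn) = g(m) + g(n)` whenever `gcd(m,n) = 1`. -/
def IsAdditive (g : ℕ → ℂ) : Prop :=
  ∀ m n : ℕ, Nat.Coprime m n → g (m * n) = g m + g n

lemma add_g1 {g : ℕ → ℂ} (hg : IsAdditive g) : g 1 = 0 := by
  have := hg 1 1 (Nat.coprime_one_left 1)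
  simpa using this

lemma additive_factorization {g : ℕ → ℂ} (hg : IsAdditive g) :
    ∀ {n : ℕ}, n ≠ 0 → g n = n.factorization.sum fun p k => g (p ^ k) := by
  apply Nat.recOnPosPrimePosCoprime
  · rintro p k hp hk -
    rw [hp.factorization_pow, Finsupp.sum_single_index]
    rw [pow_zero]; exact add_g1 hg
  · simp
  · rintro -
    rw [Nat.factorization_one, add_g1 hg]
    simp
  · intro a b ha1 hb1 hab iha ihb habpos
    rw [hg a b hab, iha (left_ne_zero_of_mul habpos), ihb (right_ne_zero_of_mul habpos),
      Nat.factorization_mul_of_coprime hab, ← Finsupp.sum_add_index_of_disjoint]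
    exact hab.disjoint_primeFactors

lemma decomp {g : ℕ → ℂ} (hg : IsAdditive g) {Y : ℝ} {n : ℕ} (hn : n ≠ 0) (hnY : n ≤ ⌊Y⌋₊) :
    g n = ∑ q ∈ ppows Y, if q ∣ n ∧ ¬ (q * q.minFac) ∣ n then g q else 0 := by
  rw [additive_factorization hg hn, Finsupp.sum, Nat.support_factorization, ← Finset.sum_filter]
  refine Finset.sum_nbij' (fun p => p ^ n.factorization p) (fun q => q.minFac) ?_ ?_ ?_ ?_ ?_
  · intro p hp
    have hpp : p.Prime := Nat.prime_of_mem_primeFactors hp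
    have hv : n.factorization p ≠ 0 := by
      rw [← Finsupp.mem_support_iff, Nat.support_factorization]; exact hp
    have hdvd : p ^ n.factorization p ∣ n := Nat.ordProj_dvd n p
    have hle : p ^ n.factorization p ≤ n := Nat.le_of_dvd (Nat.pos_of_ne_zero hn) hdvd
    simp only [ppows, Finset.mem_filter, Finset.mem_Icc, Finset.mem_coe]
    refine ⟨⟨⟨?_, le_trans hle hnY⟩, ?_⟩, ?_, ?_⟩
    · exact le_trans hpp.two_le (Nat.le_self_pow hv p)
    · exact hpp.isPrimePow.pow hv
    · exact hdvd
    · rw [hpp.pow_minFac hv, ← pow_succ]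
      exact Nat.pow_succ_factorization_not_dvd hn hpp
  · intro q hq
    simp only [ppows, Finset.mem_filter, Finset.mem_Icc] at hq
    obtain ⟨⟨⟨hq2, _⟩, hqpp⟩, hqdvd, _⟩ := hq
    have hpf : q.minFac.Prime := Nat.minFac_prime (by omega)
    exact Nat.mem_primeFactors.mpr ⟨hpf, dvd_trans (Nat.minFac_dvd q) hqdvd, hn⟩
  · intro p hp
    have hpp : p.Prime := Nat.prime_of_mem_primeFactors hp
    have hv : n.factorization p ≠ 0 := by
      rw [← Finsupp.mem_support_iff, Nat.support_factorization]; exact hp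
    exact hpp.pow_minFac hv
  · intro q hq
    simp only [ppows, Finset.mem_filter, Finset.mem_Icc] at hq
    obtain ⟨⟨⟨hq2, _⟩, hqpp⟩, hqdvd, hqnd⟩ := hq
    set p := q.minFac with hpdef
    have hpf : p.Prime := Nat.minFac_prime (by omega)
    have hk : q = p ^ q.factorization p := hqpp.minFac_pow_factorization_eq.symm
    set k := q.factorization p with hkdef
    have hk0 : k ≠ 0 := by
      intro h; rw [h, pow_zero] at hk; omega
    -- n.factorization p = k
    have h1 : k ≤ n.factorization p := by
      rw [← Nat.Prime.pow_dvd_iff_le_factorization hpf hn, ← hk]; exact hqdvd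
    have h2 : n.factorization p ≤ k := by
      by_contra h
      push_neg at h
      exact hqnd (by rw [hk, ← pow_succ]; exact dvd_trans (pow_dvd_pow p h) (Nat.ordProj_dvd n p))
    show p ^ n.factorization p = q
    rw [le_antisymm h2 h1]
    exact hk.symm
  · intro p hp; rfl

lemma sum_eq {g : ℕ → ℂ} (hg : IsAdditive g) (Y : ℝ) :
    ∑ n ∈ Finset.Icc 1 ⌊Y⌋₊, g n
      = ∑ q ∈ ppows Y, g q *
          (((⌊Y⌋₊ / q : ℕ) : ℂ) - ((⌊Y⌋₊ / (q * q.minFac) : ℕ) : ℂ)) := by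
  set N := ⌊Y⌋₊ with hN
  have h1 : ∀ n ∈ Finset.Icc 1 N, g n
      = ∑ q ∈ ppows Y, if q ∣ n ∧ ¬ (q * q.minFac) ∣ n then g q else 0 := by
    intro n hn
    rw [Finset.mem_Icc] at hn
    exact decomp hg (by omega) hn.2
  rw [Finset.sum_congr rfl h1, Finset.sum_comm]
  refine Finset.sum_congr rfl fun q hq => ?_
  simp only [ppows, Finset.mem_filter, Finset.mem_Icc] at hq
  obtain ⟨⟨hq2, hqN⟩, hqpp⟩ := hq
  rw [Finset.sum_ite, Finset.sum_const, Finset.sum_const_zero, add_zero]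
  have hsd : (Finset.Icc 1 N).filter (fun n => q ∣ n ∧ ¬ (q * q.minFac) ∣ n)
      = ((Finset.Icc 1 N).filter (fun n => q ∣ n)) \
        ((Finset.Icc 1 N).filter (fun n => (q * q.minFac) ∣ n)) := by
    ext n
    simp only [Finset.mem_filter, Finset.mem_sdiff, Finset.mem_Icc]
    tauto
  have hsub : ((Finset.Icc 1 N).filter (fun n => (q * q.minFac) ∣ n)) ⊆
      ((Finset.Icc 1 N).filter (fun n => q ∣ n)) := by
    intro n hn
    simp only [Finset.mem_filter] at hn ⊢
    exact ⟨hn.1, dvd_trans (dvd_mul_right q q.minFac) hn.2⟩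
  have hIcc : Finset.Icc 1 N = Finset.Ioc 0 N := by ext n; simp only [Finset.mem_Icc, Finset.mem_Ioc]; omega
  have hc1 : ((Finset.Icc 1 N).filter (fun n => q ∣ n)).card = N / q := by
    rw [hIcc]; exact Nat.Ioc_filter_dvd_card_eq_div N q
  have hc2 : ((Finset.Icc 1 N).filter (fun n => (q * q.minFac) ∣ n)).card
      = N / (q * q.minFac) := by
    rw [hIcc]; exact Nat.Ioc_filter_dvd_card_eq_div N _
  have hle : N / (q * q.minFac) ≤ N / q :=
    Nat.div_le_div_left (Nat.le_mul_of_pos_right q (Nat.minFac_pos _)) (by omega)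
  rw [hsd, Finset.card_sdiff_of_subset hsub, hc1, hc2, nsmul_eq_mul, Nat.cast_sub hle, mul_comm]

lemma floor_div_est {Y : ℝ} (hY : 0 < Y) {d : ℕ} (hd : 0 < d) :
    |((⌊Y⌋₊ / d : ℕ) : ℝ) / Y - 1 / d| ≤ 1 / Y := by
  have hd0 : (0:ℝ) < d := Nat.cast_pos.mpr hd
  have hfl : ((⌊Y⌋₊ / d : ℕ) : ℝ) = (⌊Y / d⌋₊ : ℝ) := by rw [Nat.floor_div_natCast]
  set F : ℝ := (⌊Y / d⌋₊ : ℝ) with hF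
  have h1 : F ≤ Y / d := Nat.floor_le (by positivity)
  have h2 : Y / d ≤ F + 1 := (Nat.lt_floor_add_one (Y / d)).le
  have e1 : (Y / d) / Y = 1 / d := by field_simp
  have e2 : (Y / d - 1) / Y = 1 / d - 1 / Y := by field_simp
  have hYinv : (0:ℝ) < 1 / Y := by positivity
  rw [hfl, abs_le]
  constructor
  · have l1 : (Y / d - 1) / Y ≤ F / Y := by gcongr ?_ / Y; linarith
    rw [e2] at l1; linarith
  · have l2 : F / Y ≤ (Y / d) / Y := by gcongr ?_ / Y
    rw [e1] at l2; linarith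

lemma err_bound {g : ℕ → ℂ} (hg : IsAdditive g) {Y : ℝ} (hY : 3 ≤ Y) :
    ‖(1 / (Y:ℂ)) * ∑ n ∈ Finset.Icc 1 ⌊Y⌋₊, g n - Ag g Y‖
      ≤ (2 / Y) * ∑ q ∈ ppows Y, ‖g q‖ := by
  have hY0 : (0:ℝ) < Y := by linarith
  rw [sum_eq hg Y, Ag, Finset.mul_sum, ← Finset.sum_sub_distrib]
  refine le_trans (norm_sum_le _ _) ?_
  rw [Finset.mul_sum]
  refine Finset.sum_le_sum fun q hq => ?_
  simp only [ppows, Finset.mem_filter, Finset.mem_Icc] at hq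
  obtain ⟨⟨hq2, hqN⟩, hqpp⟩ := hq
  set p := q.minFac with hp
  have hpp : p.Prime := Nat.minFac_prime (by omega)
  set r : ℝ := ((((⌊Y⌋₊ / q : ℕ) : ℝ) / Y - 1 / (q:ℝ))
      - ((((⌊Y⌋₊ / (q * p) : ℕ)) : ℝ) / Y - 1 / (((q * p : ℕ)):ℝ))) with hr
  have key : (1 / (Y:ℂ)) * (g q * (((⌊Y⌋₊ / q : ℕ) : ℂ) - ((⌊Y⌋₊ / (q * p) : ℕ) : ℂ)))
      - g q * (1 / (q:ℂ)) * (1 - 1 / (p:ℂ)) = g q * (r:ℂ) := by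
    have hqC : (q:ℂ) ≠ 0 := by
      simp only [ne_eq, Nat.cast_eq_zero]; omega
    have hpC : (p:ℂ) ≠ 0 := by
      simp only [ne_eq, Nat.cast_eq_zero]; exact hpp.pos.ne'
    have hYC : (Y:ℂ) ≠ 0 := by
      simp only [ne_eq, Complex.ofReal_ne_zero]; exact hY0.ne'
    rw [hr]
    push_cast
    field_simp
    ring
  rw [key, norm_mul, Complex.norm_real]
  have h1 := floor_div_est hY0 (show 0 < q by omega)
  have h2 := floor_div_est hY0 (show 0 < q * p from Nat.mul_pos (by omega) hpp.pos)
  have habs : |r| ≤ 2 / Y := by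
    rw [hr]
    refine le_trans (abs_sub _ _) ?_
    have : (2:ℝ)/Y = 1/Y + 1/Y := by ring
    rw [this]
    exact add_le_add h1 h2
  calc ‖g q‖ * |r| ≤ ‖g q‖ * (2 / Y) :=
        mul_le_mul_of_nonneg_left habs (norm_nonneg _)
    _ = 2 / Y * ‖g q‖ := mul_comm _ _

lemma cauchy_schwarz (g : ℕ → ℂ) (Y : ℝ) :
    ∑ q ∈ ppows Y, ‖g q‖ ≤ Bg g Y * Real.sqrt (∑ q ∈ ppows Y, (q : ℝ)) := by
  have hrw : ∀ q ∈ ppows Y, ‖g q‖ = (‖g q‖ / Real.sqrt q) * Real.sqrt q := by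
    intro q hq
    simp only [ppows, Finset.mem_filter, Finset.mem_Icc] at hq
    have : Real.sqrt q ≠ 0 := by
      refine (Real.sqrt_pos.mpr ?_).ne'
      have : (2:ℝ) ≤ q := by exact_mod_cast hq.1.1
      linarith
    rw [div_mul_cancel₀ _ this]
  rw [Finset.sum_congr rfl hrw]
  have hCS := Finset.sum_mul_sq_le_sq_mul_sq (ppows Y)
    (fun q => ‖g q‖ / Real.sqrt q) (fun q => Real.sqrt q)
  have hf2 : ∀ q ∈ ppows Y, (‖g q‖ / Real.sqrt q) ^ 2 = ‖g q‖ ^ 2 / (q : ℝ) := by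
    intro q hq
    simp only [ppows, Finset.mem_filter, Finset.mem_Icc] at hq
    have hq0 : (0:ℝ) ≤ q := by positivity
    rw [div_pow, Real.sq_sqrt hq0]
  have hg2 : ∀ q ∈ ppows Y, (Real.sqrt q) ^ 2 = (q : ℝ) := by
    intro q hq
    exact Real.sq_sqrt (by positivity)
  rw [Finset.sum_congr rfl hf2, Finset.sum_congr rfl hg2] at hCS
  have hS : (0:ℝ) ≤ ∑ q ∈ ppows Y, (‖g q‖ / Real.sqrt q) * Real.sqrt q := by
    apply Finset.sum_nonneg
    intro q hq
    positivity
  calc ∑ q ∈ ppows Y, (‖g q‖ / Real.sqrt q) * Real.sqrt q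
      = Real.sqrt ((∑ q ∈ ppows Y, (‖g q‖ / Real.sqrt q) * Real.sqrt q) ^ 2) :=
        (Real.sqrt_sq hS).symm
    _ ≤ Real.sqrt ((∑ q ∈ ppows Y, ‖g q‖ ^ 2 / (q:ℝ)) * ∑ q ∈ ppows Y, (q:ℝ)) :=
        Real.sqrt_le_sqrt hCS
    _ = Bg g Y * Real.sqrt (∑ q ∈ ppows Y, (q : ℝ)) := by
        rw [Bg, ← Real.sqrt_mul]
        apply Finset.sum_nonneg
        intro q hq
        positivity

lemma chebyshev {Y : ℝ} (hY : 3 ≤ Y) :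
    (((Finset.Ioc ⌊Real.sqrt Y⌋₊ ⌊Y⌋₊).filter Nat.Prime).card : ℝ)
      ≤ 6 * Y / Real.log Y := by
  have hY0 : (0:ℝ) < Y := by linarith
  have hlogY : 0 < Real.log Y := Real.log_pos (by linarith)
  set m := ⌊Real.sqrt Y⌋₊ with hm
  set N := ⌊Y⌋₊ with hN
  set P := (Finset.Ioc m N).filter Nat.Prime with hP
  set c := P.card with hc
  have h1 : (m + 1) ^ c ≤ ∏ p ∈ P, p := by
    apply Finset.pow_card_le_prod
    intro p hp
    simp only [hP, Finset.mem_filter, Finset.mem_Ioc] at hp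
    omega
  have h2 : ∏ p ∈ P, p ≤ primorial N := by
    apply Finset.prod_le_prod_of_subset_of_one_le'
    · intro p hp
      simp only [hP, Finset.mem_filter, Finset.mem_Ioc] at hp
      simp only [Finset.mem_filter, Finset.mem_range]
      exact ⟨by omega, hp.2⟩
    · intro i hi _
      simp only [Finset.mem_filter] at hi
      exact hi.2.one_lt.le
  have h3 : (m + 1 : ℕ) ^ c ≤ 4 ^ N := le_trans h1 (le_trans h2 (primorial_le_4_pow N))
  have h4 : ((m + 1 : ℕ) : ℝ) ^ c ≤ (4 : ℝ) ^ N := by exact_mod_cast h3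
  have h5 : (c : ℝ) * Real.log ((m + 1 : ℕ) : ℝ) ≤ (N : ℝ) * Real.log 4 := by
    have h := Real.log_le_log (by positivity) h4
    rwa [Real.log_pow, Real.log_pow] at h
  have hsqY : Real.sqrt Y ≤ ((m + 1 : ℕ) : ℝ) := by
    push_cast
    exact (Nat.lt_floor_add_one _).le
  have hsq3 : (0:ℝ) < Real.sqrt Y := Real.sqrt_pos.mpr hY0
  have h6 : Real.log Y / 2 ≤ Real.log ((m + 1 : ℕ) : ℝ) := by
    rw [← Real.log_sqrt hY0.le]
    exact Real.log_le_log hsq3 hsqY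
  have h7 : Real.log 4 ≤ 3 := by
    have := Real.log_le_sub_one_of_pos (show (0:ℝ) < 4 by norm_num)
    linarith
  have h8 : (N : ℝ) ≤ Y := Nat.floor_le hY0.le
  have hN0 : (0:ℝ) ≤ (N:ℝ) := Nat.cast_nonneg N
  have h9 : (c : ℝ) * (Real.log Y / 2) ≤ Y * 3 := by
    calc (c : ℝ) * (Real.log Y / 2) ≤ (c : ℝ) * Real.log ((m + 1 : ℕ) : ℝ) := by
          apply mul_le_mul_of_nonneg_left h6 (Nat.cast_nonneg c)
      _ ≤ (N : ℝ) * Real.log 4 := h5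
      _ ≤ Y * 3 := by
          apply mul_le_mul h8 h7 (Real.log_nonneg (by norm_num)) hY0.le
  rw [le_div_iff₀ hlogY]
  nlinarith [h9]

lemma sqrtY_logY_sq {Y : ℝ} (hY : 3 ≤ Y) : Real.sqrt Y * Real.log Y ^ 2 ≤ 16 * Y := by
  have hY0 : (0:ℝ) < Y := by linarith
  set t : ℝ := Y ^ ((1:ℝ)/4) with ht
  have ht0 : 0 < t := Real.rpow_pos_of_pos hY0 _
  have hlt : Real.log t = (1/4) * Real.log Y := Real.log_rpow hY0 _
  have hlt2 : Real.log t ≤ t := le_trans (Real.log_le_sub_one_of_pos ht0) (by linarith)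
  have hlY : Real.log Y ≤ 4 * t := by rw [show Real.log Y = 4 * Real.log t by rw [hlt]; ring]; linarith
  have hlY0 : 0 ≤ Real.log Y := Real.log_nonneg (by linarith)
  have ht2 : t ^ 2 = Real.sqrt Y := by
    rw [Real.sqrt_eq_rpow, ht, ← Real.rpow_natCast (Y ^ ((1:ℝ)/4)) 2, ← Real.rpow_mul hY0.le]
    norm_num
  have h2 : Real.log Y ^ 2 ≤ 16 * Real.sqrt Y := by
    rw [← ht2]
    nlinarith [hlY, hlY0, ht0]
  have hs : Real.sqrt Y * Real.sqrt Y = Y := Real.mul_self_sqrt hY0.le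
  have hs0 : 0 ≤ Real.sqrt Y := Real.sqrt_nonneg Y
  nlinarith [h2, hs0]

lemma sqrtY_le {Y : ℝ} (hY : 3 ≤ Y) : Real.sqrt Y * Real.log Y ≤ 2 * Y := by
  have hY0 : (0:ℝ) < Y := by linarith
  have hs : Real.sqrt Y * Real.sqrt Y = Y := Real.mul_self_sqrt hY0.le
  have hs0 : 0 < Real.sqrt Y := Real.sqrt_pos.mpr hY0
  have h1 : Real.log Y = 2 * Real.log (Real.sqrt Y) := by
    rw [Real.log_sqrt hY0.le]; ring
  have h2 : Real.log (Real.sqrt Y) ≤ Real.sqrt Y :=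
    le_trans (Real.log_le_sub_one_of_pos hs0) (by linarith)
  nlinarith [h1, h2, hs0]

lemma higher_card {Y : ℝ} (hY : 3 ≤ Y) :
    (((ppows Y).filter (fun q => ¬ q.Prime)).card : ℝ)
      ≤ Real.sqrt Y * (2 * Real.log Y) := by
  classical
  have hY0 : (0:ℝ) < Y := by linarith
  have hlY0 : 0 ≤ Real.log Y := Real.log_nonneg (by linarith)
  set m := ⌊Real.sqrt Y⌋₊ with hm
  set K := ⌊Real.logb 2 Y⌋₊ with hK
  have hcard : ((ppows Y).filter (fun q => ¬ q.Prime)).card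
      ≤ (Finset.Icc 2 m ×ˢ Finset.Icc 2 K).card := by
    apply Finset.card_le_card_of_injOn (fun q => (q.minFac, q.factorization q.minFac))
    · intro q hq
      simp only [ppows, Finset.mem_filter, Finset.mem_Icc, Finset.mem_coe] at hq
      obtain ⟨⟨⟨hq2, hqN⟩, hpp⟩, hnp⟩ := hq
      set p := q.minFac with hp
      have hppr : p.Prime := Nat.minFac_prime (by omega)
      set k := q.factorization p with hkdef
      have heq : p ^ k = q := hpp.minFac_pow_factorization_eq
      have hk0 : k ≠ 0 := by intro h; rw [h, pow_zero] at heq; omega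
      have hk1 : k ≠ 1 := by intro h; rw [h, pow_one] at heq; exact hnp (heq ▸ hppr)
      have hk2 : 2 ≤ k := by omega
      have hqY : (q:ℝ) ≤ Y := le_trans (Nat.cast_le.mpr hqN) (Nat.floor_le hY0.le)
      have hp2 : ((p:ℝ))^2 ≤ Y := by
        have : p ^ 2 ≤ q := by
          rw [← heq]; exact Nat.pow_le_pow_right hppr.pos hk2
        calc ((p:ℝ))^2 = ((p^2 : ℕ) : ℝ) := by push_cast; ring
          _ ≤ (q:ℝ) := Nat.cast_le.mpr this
          _ ≤ Y := hqY
      have hpm : p ≤ m := by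
        apply Nat.le_floor
        calc (p:ℝ) = Real.sqrt ((p:ℝ)^2) := (Real.sqrt_sq (Nat.cast_nonneg p)).symm
          _ ≤ Real.sqrt Y := Real.sqrt_le_sqrt hp2
      have hkK : k ≤ K := by
        apply Nat.le_floor
        have h2k : (2:ℝ)^k ≤ Y := by
          have : 2 ^ k ≤ q := by
            rw [← heq]; exact Nat.pow_le_pow_left hppr.two_le k
          calc (2:ℝ)^k = ((2^k : ℕ) : ℝ) := by push_cast; ring
            _ ≤ (q:ℝ) := Nat.cast_le.mpr this
            _ ≤ Y := hqY
        have hl : (k:ℝ) * Real.log 2 ≤ Real.log Y := by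
          rw [← Real.log_pow]
          exact Real.log_le_log (by positivity) h2k
        rw [Real.logb, le_div_iff₀ (Real.log_pos one_lt_two)]
        linarith
      exact Finset.mem_product.mpr ⟨Finset.mem_Icc.mpr ⟨hppr.two_le, hpm⟩,
        Finset.mem_Icc.mpr ⟨hk2, hkK⟩⟩
    · intro a ha b hb hab
      simp only [ppows, Finset.mem_coe, Finset.mem_filter, Finset.mem_Icc] at ha hb
      obtain ⟨⟨_, hppa⟩, _⟩ := ha
      obtain ⟨⟨_, hppb⟩, _⟩ := hb
      have h1 := hppa.minFac_pow_factorization_eq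
      have h2 := hppb.minFac_pow_factorization_eq
      rw [Prod.mk.injEq] at hab
      rw [← h1, ← h2, hab.2, hab.1]
  have hmK : (((Finset.Icc 2 m ×ˢ Finset.Icc 2 K).card : ℕ) : ℝ) ≤ (m : ℝ) * K := by
    rw [Finset.card_product, Nat.card_Icc, Nat.card_Icc]
    push_cast
    have h1 : ((m + 1 - 2 : ℕ) : ℝ) ≤ (m:ℝ) := Nat.cast_le.mpr (by omega)
    have h2 : ((K + 1 - 2 : ℕ) : ℝ) ≤ (K:ℝ) := Nat.cast_le.mpr (by omega)
    exact mul_le_mul h1 h2 (Nat.cast_nonneg _) (Nat.cast_nonneg _)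
  have hmY : (m : ℝ) ≤ Real.sqrt Y := Nat.floor_le (Real.sqrt_nonneg Y)
  have hKY : (K : ℝ) ≤ 2 * Real.log Y := by
    have h1 : (K : ℝ) ≤ Real.logb 2 Y := Nat.floor_le (Real.logb_nonneg one_lt_two (by linarith))
    have h2 : Real.logb 2 Y ≤ 2 * Real.log Y := by
      rw [Real.logb, div_le_iff₀ (Real.log_pos one_lt_two)]
      nlinarith [Real.log_two_gt_d9, hlY0]
    linarith
  calc (((ppows Y).filter (fun q => ¬ q.Prime)).card : ℝ)
      ≤ (((Finset.Icc 2 m ×ˢ Finset.Icc 2 K).card : ℕ) : ℝ) := Nat.cast_le.mpr hcard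
    _ ≤ (m : ℝ) * K := hmK
    _ ≤ Real.sqrt Y * (2 * Real.log Y) :=
        mul_le_mul hmY hKY (Nat.cast_nonneg _) (Real.sqrt_nonneg Y)

lemma ppows_card {Y : ℝ} (hY : 3 ≤ Y) :
    (((ppows Y).card : ℕ) : ℝ) ≤ 40 * Y / Real.log Y := by
  classical
  have hY0 : (0:ℝ) < Y := by linarith
  have hlogY : 0 < Real.log Y := Real.log_pos (by linarith)
  set m := ⌊Real.sqrt Y⌋₊ with hm
  set N := ⌊Y⌋₊ with hN
  have hsplit : (ppows Y).card
      = ((ppows Y).filter Nat.Prime).card + ((ppows Y).filter (fun q => ¬ q.Prime)).card :=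
    (Finset.card_filter_add_card_filter_not (p := Nat.Prime)).symm
  have hsub : (ppows Y).filter Nat.Prime
      ⊆ Finset.Icc 1 m ∪ (Finset.Ioc m N).filter Nat.Prime := by
    intro q hq
    simp only [ppows, Finset.mem_filter, Finset.mem_Icc] at hq
    obtain ⟨⟨⟨hq2, hqN⟩, _⟩, hqpr⟩ := hq
    rcases le_or_gt q m with h | h
    · exact Finset.mem_union_left _ (Finset.mem_Icc.mpr ⟨by omega, h⟩)
    · exact Finset.mem_union_right _
        (Finset.mem_filter.mpr ⟨Finset.mem_Ioc.mpr ⟨h, hqN⟩, hqpr⟩)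
  have hprime : (((ppows Y).filter Nat.Prime).card : ℝ)
      ≤ (m : ℝ) + 6 * Y / Real.log Y := by
    calc (((ppows Y).filter Nat.Prime).card : ℝ)
        ≤ ((Finset.Icc 1 m ∪ (Finset.Ioc m N).filter Nat.Prime).card : ℝ) :=
          Nat.cast_le.mpr (Finset.card_le_card hsub)
      _ ≤ ((Finset.Icc 1 m).card : ℝ) + (((Finset.Ioc m N).filter Nat.Prime).card : ℝ) := by
          push_cast [← Nat.cast_add]
          exact_mod_cast Finset.card_union_le _ _
      _ ≤ (m : ℝ) + 6 * Y / Real.log Y := by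
          have h1 : ((Finset.Icc 1 m).card : ℝ) = (m : ℝ) := by
            rw [Nat.card_Icc]; push_cast; ring
          rw [h1]
          exact add_le_add le_rfl (chebyshev hY)
  have hmle : (m : ℝ) ≤ 2 * Y / Real.log Y := by
    rw [le_div_iff₀ hlogY]
    calc (m : ℝ) * Real.log Y ≤ Real.sqrt Y * Real.log Y :=
          mul_le_mul_of_nonneg_right (Nat.floor_le (Real.sqrt_nonneg Y)) hlogY.le
      _ ≤ 2 * Y := sqrtY_le hY
  have hhigh : (((ppows Y).filter (fun q => ¬ q.Prime)).card : ℝ)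
      ≤ 32 * Y / Real.log Y := by
    refine le_trans (higher_card hY) ?_
    rw [le_div_iff₀ hlogY]
    nlinarith [sqrtY_logY_sq hY]
  rw [hsplit]
  push_cast
  have : (2:ℝ) * Y / Real.log Y + 6 * Y / Real.log Y + 32 * Y / Real.log Y
      = 40 * Y / Real.log Y := by ring
  linarith [hprime, hmle, hhigh]

/-- For any additive `g : ℕ → ℂ` and `Y ≥ 3`,
`(1/Y) ∑_{n ≤ Y} g(n) = A_g(Y) + O(B_g(Y)/√(log Y))` with an absolute constant. -/
theorem stmt0 :
    ∃ C : ℝ, 0 < C ∧ ∀ (g : ℕ → ℂ), IsAdditive g → ∀ Y : ℝ, 3 ≤ Y →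
      ‖(1 / (Y : ℂ)) * ∑ n ∈ Finset.Icc 1 ⌊Y⌋₊, g n - Ag g Y‖
        ≤ C * Bg g Y / Real.sqrt (Real.log Y) := by
  refine ⟨13, by norm_num, ?_⟩
  intro g hg Y hY
  have hY0 : (0:ℝ) < Y := by linarith
  have hlogY : 0 < Real.log Y := Real.log_pos (by linarith)
  have hsl : 0 < Real.sqrt (Real.log Y) := Real.sqrt_pos.mpr hlogY
  have hB : 0 ≤ Bg g Y := Real.sqrt_nonneg _
  have h1 := err_bound hg hY
  have h2 := cauchy_schwarz g Y
  have h3 : ∑ q ∈ ppows Y, (q:ℝ) ≤ 40 * Y ^ 2 / Real.log Y := by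
    have hb : ∀ q ∈ ppows Y, (q:ℝ) ≤ Y := by
      intro q hq
      simp only [ppows, Finset.mem_filter, Finset.mem_Icc] at hq
      exact le_trans (Nat.cast_le.mpr hq.1.2) (Nat.floor_le hY0.le)
    calc ∑ q ∈ ppows Y, (q:ℝ) ≤ (ppows Y).card • Y := Finset.sum_le_card_nsmul _ _ _ hb
      _ = ((ppows Y).card : ℝ) * Y := nsmul_eq_mul _ _
      _ ≤ (40 * Y / Real.log Y) * Y := mul_le_mul_of_nonneg_right (ppows_card hY) hY0.le
      _ = 40 * Y ^ 2 / Real.log Y := by ring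
  have h4 : Real.sqrt (∑ q ∈ ppows Y, (q:ℝ)) ≤ 6.5 * Y / Real.sqrt (Real.log Y) := by
    have hs : (6.5 * Y / Real.sqrt (Real.log Y)) ^ 2 = 42.25 * Y ^ 2 / Real.log Y := by
      rw [div_pow, mul_pow, Real.sq_sqrt hlogY.le]
      ring
    calc Real.sqrt (∑ q ∈ ppows Y, (q:ℝ))
        ≤ Real.sqrt ((6.5 * Y / Real.sqrt (Real.log Y)) ^ 2) := by
          apply Real.sqrt_le_sqrt
          rw [hs]
          refine le_trans h3 ?_
          gcongr ?_ / Real.log Y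
          nlinarith [sq_nonneg Y]
      _ = 6.5 * Y / Real.sqrt (Real.log Y) := Real.sqrt_sq (by positivity)
  have h5 : ∑ q ∈ ppows Y, ‖g q‖ ≤ Bg g Y * (6.5 * Y / Real.sqrt (Real.log Y)) :=
    le_trans h2 (mul_le_mul_of_nonneg_left h4 hB)
  calc ‖(1 / (Y : ℂ)) * ∑ n ∈ Finset.Icc 1 ⌊Y⌋₊, g n - Ag g Y‖
      ≤ (2 / Y) * ∑ q ∈ ppows Y, ‖g q‖ := h1
    _ ≤ (2 / Y) * (Bg g Y * (6.5 * Y / Real.sqrt (Real.log Y))) :=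
        mul_le_mul_of_nonneg_left h5 (by positivity)
    _ = 13 * Bg g Y / Real.sqrt (Real.log Y) := by
        field_simp
        ring
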